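/- Let opportunities $1, \dots, n$ have values $v_i > 0$ and costs $c_i > 0$. For $\beta > 0$ define the won set $S(\beta) = \{ i : \beta v_i \geq c_i \}$ and the realized ROI $R(\beta) = \big(\sum_{i \in S(\beta)} v_i\big) / \big(\sum_{i \in S(\beta)} c_i\big)$ whenever $S(\beta)$ is nonempty. Then $R$ is non-increasing: for $0 < \beta \leq \beta'$ with $S(\beta)$ nonempty, $R(\beta') \leq R(\beta)$. -/
import Mathlib


/-- ROI Monotonicity: realized ROI is non-increasing in the bid coefficient. -/
theorem roi_monotone
    (n : ℕ) (v c : Fin n → ℝ)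
    (hv : ∀ i, 0 < v i) (hc : ∀ i, 0 < c i)
    (β β' : ℝ) (hβ : 0 < β) (hle : β ≤ β')
    (hne : (Finset.univ.filter (fun i : Fin n => β * v i ≥ c i)).Nonempty) :
    (∑ i ∈ Finset.univ.filter (fun i : Fin n => β' * v i ≥ c i), v i) /
        (∑ i ∈ Finset.univ.filter (fun i : Fin n => β' * v i ≥ c i), c i) ≤
      (∑ i ∈ Finset.univ.filter (fun i : Fin n => β * v i ≥ c i), v i) /
        (∑ i ∈ Finset.univ.filter (fun i : Fin n => β * v i ≥ c i), c i) := by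
  set S := Finset.univ.filter (fun i : Fin n => β * v i ≥ c i) with hS
  set T := Finset.univ.filter (fun i : Fin n => β' * v i ≥ c i) with hT
  have hvi : ∀ i, 0 ≤ v i := fun i => (hv i).le
  have hci : ∀ i, 0 ≤ c i := fun i => (hc i).le
  have hST : S ⊆ T := by
    intro i hi
    simp only [hS, hT, Finset.mem_filter, Finset.mem_univ, true_and] at hi ⊢
    exact le_trans hi (mul_le_mul_of_nonneg_right hle (hvi i))
  set A := ∑ i ∈ S, v i with hA
  set B := ∑ i ∈ S, c i with hB
  set a := ∑ i ∈ T \ S, v i with ha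
  set b := ∑ i ∈ T \ S, c i with hb
  have hTv : ∑ i ∈ T, v i = A + a := by
    rw [hA, ha, Finset.sum_sdiff_eq_sub hST]; ring
  have hTc : ∑ i ∈ T, c i = B + b := by
    rw [hB, hb, Finset.sum_sdiff_eq_sub hST]; ring
  have hBpos : 0 < B := Finset.sum_pos (fun i _ => hc i) hne
  have ha0 : 0 ≤ a := Finset.sum_nonneg fun i _ => hvi i
  have hb0 : 0 ≤ b := Finset.sum_nonneg fun i _ => hci i
  -- β * a ≤ b : newly added items have β * v i ≤ c i
  have hab : β * a ≤ b := by
    rw [ha, hb, Finset.mul_sum]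
    refine Finset.sum_le_sum fun i hi => ?_
    rcases Finset.mem_sdiff.mp hi with ⟨_, hnS⟩
    simp only [hS, Finset.mem_filter, Finset.mem_univ, true_and, not_le, ge_iff_le] at hnS
    exact hnS.le
  -- B ≤ β * A : items in S have c i ≤ β * v i
  have hBA : B ≤ β * A := by
    rw [hA, hB, Finset.mul_sum]
    refine Finset.sum_le_sum fun i hi => ?_
    simp only [hS, Finset.mem_filter, Finset.mem_univ, true_and, ge_iff_le] at hi
    exact hi
  have hA0 : 0 ≤ A := Finset.sum_nonneg fun i _ => hvi i
  rw [hTv, hTc, div_le_div_iff₀ (by linarith) hBpos]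
  have key : a * B ≤ A * b := by
    calc a * B ≤ a * (β * A) := mul_le_mul_of_nonneg_left hBA ha0
    _ = (β * a) * A := by ring
    _ ≤ b * A := mul_le_mul_of_nonneg_right hab hA0
    _ = A * b := mul_comm _ _
  nlinarith
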